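/- Let $1<p<d$ and let $f$ satisfy ($p$-homogeneity) and (G). Fix $T>r_0$, $\varepsilon_0>0$ and $R>1$ with $R-\varepsilon_0 T\ge 2$. Then there exists $c_2=c_2(p,d,r_0)>0$ such that for every $0<\varepsilon\le\varepsilon_0$ and every $z\in\mathbb{R}^m$: $\varphi_{\varepsilon,T,R}(z)\le c_2|z|^p$, where $\varphi_{\varepsilon,T,R}$ is the nonlocal capacitary density defined by $\varphi_{\varepsilon,T,R}(z)=\inf\{\mathcal F_\varepsilon^T(v,B_R): v\in L^p(B_R;\mathbb{R}^m),\ v\equiv 0\text{ in }B_1,\ v\equiv z\text{ on }\partial B_R+B_{\varepsilon T}\}$. -/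

import Mathlib

open MeasureTheory Metric ENNReal Set

/-- `M(ξ) = sup_{|z|=1} f(ξ,z)` (as an extended nonnegative real). -/
noncomputable def Msup {d m : ℕ} (f : EuclideanSpace ℝ (Fin d) → EuclideanSpace ℝ (Fin m) → ℝ)
    (ξ : EuclideanSpace ℝ (Fin d)) : ℝ≥0∞ :=
  ⨆ z ∈ sphere (0 : EuclideanSpace ℝ (Fin m)) 1, ENNReal.ofReal (f ξ z)

/-- The truncated convolution energy `𝓕_α^T(v, ℝ^d)`. -/
noncomputable def Ftrunc {d m : ℕ} (α T : ℝ)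
    (f : EuclideanSpace ℝ (Fin d) → EuclideanSpace ℝ (Fin m) → ℝ)
    (v : EuclideanSpace ℝ (Fin d) → EuclideanSpace ℝ (Fin m)) : ℝ≥0∞ :=
  ∫⁻ ξ in ball (0 : EuclideanSpace ℝ (Fin d)) T,
    ∫⁻ x, ENNReal.ofReal (f ξ ((α⁻¹ : ℝ) • (v (x + α • ξ) - v x)))

/-- The approximating capacitary density `φ_{α,T,R}(z)` (equivalent whole-space
formulation, with admissible functions extended by `z` outside `B_R`). -/
noncomputable def phiCap {d m : ℕ} (p α T R : ℝ)
    (f : EuclideanSpace ℝ (Fin d) → EuclideanSpace ℝ (Fin m) → ℝ)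
    (z : EuclideanSpace ℝ (Fin m)) : ℝ≥0∞ :=
  ⨅ v ∈ {v : EuclideanSpace ℝ (Fin d) → EuclideanSpace ℝ (Fin m) |
      MemLp (fun x => v x - z) (ENNReal.ofReal p) volume ∧
      (∀ᵐ x ∂(volume.restrict (ball (0 : EuclideanSpace ℝ (Fin d)) 1)), v x = 0) ∧
      (∀ x, x ∉ ball (0 : EuclideanSpace ℝ (Fin d)) (R - α * T) → v x = z)},
    Ftrunc α T f v


/-- Upper growth bound `φ_{ε,T,R}(z) ≤ c₂ |z|^p`, uniformly for `0 < ε ≤ ε₀`. -/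
theorem phiCap_upper_growth (d m : ℕ) (p : ℝ) (hp : 1 < p) (hpd : p < d)
    (T r0 lam0 ε0 R : ℝ) (hr0 : 0 < r0) (hT : r0 < T) (hε0 : 0 < ε0) (hR1 : 1 < R)
    (hR : 2 ≤ R - ε0 * T) (hlam0 : 0 < lam0)
    (f : EuclideanSpace ℝ (Fin d) → EuclideanSpace ℝ (Fin m) → ℝ)
    (hfmeas : Measurable (Function.uncurry f))
    (hf0 : ∀ ξ z, 0 ≤ f ξ z)
    (hhom : ∀ ξ z (t : ℝ), 0 < t → f ξ (t • z) = t ^ p * f ξ z)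
    (hG0 : ∀ ξ, ‖ξ‖ ≤ r0 → ∀ z : EuclideanSpace ℝ (Fin m), ‖z‖ = 1 → lam0 ≤ f ξ z)
    (hG1 : (∫⁻ ξ, Msup f ξ * ENNReal.ofReal (‖ξ‖ ^ p + 1)) < ⊤) :
    ∃ c₂ : ℝ, 0 < c₂ ∧ ∀ (ε : ℝ), 0 < ε → ε ≤ ε0 →
      ∀ z : EuclideanSpace ℝ (Fin m),
        phiCap p ε T R f z ≤ ENNReal.ofReal (c₂ * ‖z‖ ^ p) := by
  classical
  have hp0 : (0:ℝ) < p := lt_trans one_pos hp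
  have hT0 : (0:ℝ) < T := lt_trans hr0 hT
  -- f ξ 0 = 0
  have hf00 : ∀ ξ, f ξ 0 = 0 := by
    intro ξ
    have h := hhom ξ 0 2 (by norm_num)
    rw [smul_zero] at h
    have h2 : (1:ℝ) < 2 ^ p := by
      have : (2:ℝ) ^ (1:ℝ) ≤ 2 ^ p :=
        Real.rpow_le_rpow_left_iff (by norm_num) |>.mpr hp.le
      rw [Real.rpow_one] at this; linarith
    nlinarith [hf0 ξ 0]
  -- general pointwise bound via homogeneity and Msup
  have hbound : ∀ ξ (w : EuclideanSpace ℝ (Fin m)),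
      ENNReal.ofReal (f ξ w) ≤ ENNReal.ofReal (‖w‖ ^ p) * Msup f ξ := by
    intro ξ w
    rcases eq_or_ne w 0 with rfl | hw
    · simp [hf00 ξ]
    · have hnw : (0:ℝ) < ‖w‖ := norm_pos_iff.mpr hw
      set u : EuclideanSpace ℝ (Fin m) := ‖w‖⁻¹ • w with hu
      have hus : u ∈ sphere (0 : EuclideanSpace ℝ (Fin m)) 1 := by
        rw [mem_sphere_zero_iff_norm, hu, norm_smul, norm_inv, norm_norm,
          inv_mul_cancel₀ hnw.ne']
      have hwu : ‖w‖ • u = w := by rw [hu, smul_inv_smul₀ hnw.ne']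
      have hfw : f ξ w = ‖w‖ ^ p * f ξ u := by
        have h := hhom ξ u ‖w‖ hnw
        rw [hwu] at h; exact h
      rw [hfw, ENNReal.ofReal_mul (Real.rpow_nonneg hnw.le p)]
      refine mul_le_mul_right ?_ _
      exact le_iSup₂ (f := fun z (_ : z ∈ sphere (0:EuclideanSpace ℝ (Fin m)) 1) =>
        ENNReal.ofReal (f ξ z)) u hus
  -- constants
  set A : ℝ≥0∞ := volume (ball (0 : EuclideanSpace ℝ (Fin d)) (2 + ε0 * T)) with hA
  have hAfin : A ≠ ⊤ := measure_ball_lt_top.ne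
  set K : ℝ≥0∞ := ∫⁻ ξ, Msup f ξ * ENNReal.ofReal (‖ξ‖ ^ p + 1) with hK
  have hKfin : K ≠ ⊤ := hG1.ne
  refine ⟨(A * K).toReal + 1, by positivity, ?_⟩
  intro ε hε hεε0 z
  -- the test function
  set η : ℝ → ℝ := fun t => min (max (t - 1) 0) 1 with hηdef
  have hsub : LipschitzWith 1 (fun t : ℝ => t - 1) :=
    LipschitzWith.of_dist_le_mul fun a b => by rw [dist_sub_right]; simp
  have hηlip : LipschitzWith 1 η := (hsub.max_const 0).min_const 1
  have hη0 : ∀ t : ℝ, t ≤ 1 → η t = 0 := by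
    intro t ht
    simp only [hηdef]
    rw [max_eq_right (by linarith), min_eq_left (by norm_num)]
  have hη1 : ∀ t : ℝ, 2 ≤ t → η t = 1 := by
    intro t ht
    simp only [hηdef]
    rw [min_eq_right]
    rw [le_max_iff]; left; linarith
  set v : EuclideanSpace ℝ (Fin d) → EuclideanSpace ℝ (Fin m) :=
    fun x => η ‖x‖ • z with hv
  have hεT : ε * T ≤ ε0 * T := mul_le_mul_of_nonneg_right hεε0 hT0.le
  -- Lipschitz-type increment bound
  have hdiff : ∀ (x ξ : EuclideanSpace ℝ (Fin d)),
      ‖v (x + ε • ξ) - v x‖ ≤ ε * ‖ξ‖ * ‖z‖ := by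
    intro x ξ
    have : v (x + ε • ξ) - v x = (η ‖x + ε • ξ‖ - η ‖x‖) • z := by
      rw [hv]; simp [sub_smul]
    rw [this, norm_smul, Real.norm_eq_abs]
    have h1 : |η ‖x + ε • ξ‖ - η ‖x‖| ≤ |‖x + ε • ξ‖ - ‖x‖| := by
      have := hηlip.dist_le_mul ‖x + ε • ξ‖ ‖x‖
      simpa [Real.dist_eq] using this
    have h2 : |‖x + ε • ξ‖ - ‖x‖| ≤ ‖ε • ξ‖ := by
      have := abs_norm_sub_norm_le (x + ε • ξ) x
      simpa using this
    have h3 : ‖ε • ξ‖ = ε * ‖ξ‖ := by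
      rw [norm_smul, Real.norm_eq_abs, abs_of_pos hε]
    calc |η ‖x + ε • ξ‖ - η ‖x‖| * ‖z‖ ≤ ‖ε • ξ‖ * ‖z‖ :=
          mul_le_mul_of_nonneg_right (h1.trans h2) (norm_nonneg z)
      _ = ε * ‖ξ‖ * ‖z‖ := by rw [h3]
  -- v is admissible
  have hvmem : v ∈ {v : EuclideanSpace ℝ (Fin d) → EuclideanSpace ℝ (Fin m) |
      MemLp (fun x => v x - z) (ENNReal.ofReal p) volume ∧
      (∀ᵐ x ∂(volume.restrict (ball (0 : EuclideanSpace ℝ (Fin d)) 1)), v x = 0) ∧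
      (∀ x, x ∉ ball (0 : EuclideanSpace ℝ (Fin d)) (R - ε * T) → v x = z)} := by
    refine ⟨?_, ?_, ?_⟩
    · have hcont : Continuous (fun x : EuclideanSpace ℝ (Fin d) => v x - z) := by
        exact ((hηlip.continuous.comp continuous_norm).smul continuous_const).sub
          continuous_const
      have hcs : HasCompactSupport (fun x : EuclideanSpace ℝ (Fin d) => v x - z) := by
        refine HasCompactSupport.intro (isCompact_closedBall (0:EuclideanSpace ℝ (Fin d)) 2) ?_
        intro x hx
        have : (2:ℝ) ≤ ‖x‖ := by
          by_contra h
          exact hx (mem_closedBall_zero_iff.mpr (lt_of_not_ge h).le)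
        simp [hv, hη1 _ this]
      exact hcont.memLp_of_hasCompactSupport hcs
    · refine (ae_restrict_iff' measurableSet_ball).mpr (ae_of_all _ fun x hx => ?_)
      have : ‖x‖ ≤ 1 := (mem_ball_zero_iff.mp hx).le
      simp [hv, hη0 _ this]
    · intro x hx
      have h1 : R - ε * T ≤ ‖x‖ := by
        rw [mem_ball_zero_iff, not_lt] at hx; exact hx
      have : (2:ℝ) ≤ ‖x‖ := by linarith
      simp [hv, hη1 _ this]
  -- reduce to the energy of v
  have hstep : phiCap p ε T R f z ≤ Ftrunc ε T f v := by
    rw [phiCap]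
    exact iInf₂_le v hvmem
  refine hstep.trans ?_
  -- the main energy estimate
  have hzp : (0:ℝ) ≤ ‖z‖ ^ p := Real.rpow_nonneg (norm_nonneg z) p
  have hmain : Ftrunc ε T f v ≤ A * ENNReal.ofReal (‖z‖ ^ p) * K := by
    rw [Ftrunc]
    have hstep1 : ∀ ξ ∈ ball (0 : EuclideanSpace ℝ (Fin d)) T,
        (∫⁻ x, ENNReal.ofReal (f ξ ((ε⁻¹ : ℝ) • (v (x + ε • ξ) - v x)))) ≤
          A * ENNReal.ofReal (‖z‖ ^ p) * (Msup f ξ * ENNReal.ofReal (‖ξ‖ ^ p + 1)) := by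
      intro ξ hξ
      have hξT : ‖ξ‖ < T := mem_ball_zero_iff.mp hξ
      have hεξ : ε * ‖ξ‖ ≤ ε0 * T :=
        mul_le_mul hεε0 hξT.le (norm_nonneg ξ) hε0.le
      have hpt : ∀ x, ENNReal.ofReal (f ξ ((ε⁻¹ : ℝ) • (v (x + ε • ξ) - v x))) ≤
          (ball (0 : EuclideanSpace ℝ (Fin d)) (2 + ε0 * T)).indicator
            (fun _ => ENNReal.ofReal (‖z‖ ^ p * ‖ξ‖ ^ p) * Msup f ξ) x := by
        intro x
        by_cases hx : x ∈ ball (0 : EuclideanSpace ℝ (Fin d)) (2 + ε0 * T)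
        · rw [Set.indicator_of_mem hx]
          set w := (ε⁻¹ : ℝ) • (v (x + ε • ξ) - v x) with hw
          have hwle : ‖w‖ ≤ ‖z‖ * ‖ξ‖ := by
            rw [hw, norm_smul, Real.norm_eq_abs, abs_of_pos (inv_pos.mpr hε)]
            calc ε⁻¹ * ‖v (x + ε • ξ) - v x‖ ≤ ε⁻¹ * (ε * ‖ξ‖ * ‖z‖) :=
                  mul_le_mul_of_nonneg_left (hdiff x ξ) (inv_pos.mpr hε).le
              _ = ‖z‖ * ‖ξ‖ := by field_simp
          refine (hbound ξ w).trans ?_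
          refine mul_le_mul_left (ENNReal.ofReal_le_ofReal ?_) _
          calc ‖w‖ ^ p ≤ (‖z‖ * ‖ξ‖) ^ p :=
                Real.rpow_le_rpow (norm_nonneg w) hwle hp0.le
            _ = ‖z‖ ^ p * ‖ξ‖ ^ p := Real.mul_rpow (norm_nonneg z) (norm_nonneg ξ)
        · rw [Set.indicator_of_notMem hx]
          have hxn : 2 + ε0 * T ≤ ‖x‖ := by
            rw [mem_ball_zero_iff, not_lt] at hx; exact hx
          have h1 : (2:ℝ) ≤ ‖x + ε • ξ‖ := by
            have h2 : ‖x‖ - ‖ε • ξ‖ ≤ ‖x + ε • ξ‖ := by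
              have h := norm_add_le (x + ε • ξ) (-(ε • ξ))
              rw [add_neg_cancel_right, norm_neg] at h
              linarith
            have h3 : ‖ε • ξ‖ ≤ ε0 * T := by
              rw [norm_smul, Real.norm_eq_abs, abs_of_pos hε]; exact hεξ
            linarith
          have h0 : (2:ℝ) ≤ ‖x‖ := by nlinarith [mul_pos hε0 hT0]
          have : v (x + ε • ξ) - v x = 0 := by
            simp [hv, hη1 _ h1, hη1 _ h0]
          rw [this, smul_zero, hf00, ENNReal.ofReal_zero]
      calc (∫⁻ x, ENNReal.ofReal (f ξ ((ε⁻¹ : ℝ) • (v (x + ε • ξ) - v x))))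
          ≤ ∫⁻ x, (ball (0 : EuclideanSpace ℝ (Fin d)) (2 + ε0 * T)).indicator
              (fun _ => ENNReal.ofReal (‖z‖ ^ p * ‖ξ‖ ^ p) * Msup f ξ) x :=
            lintegral_mono hpt
        _ = ENNReal.ofReal (‖z‖ ^ p * ‖ξ‖ ^ p) * Msup f ξ * A :=
            lintegral_indicator_const measurableSet_ball _
        _ ≤ A * ENNReal.ofReal (‖z‖ ^ p) * (Msup f ξ * ENNReal.ofReal (‖ξ‖ ^ p + 1)) := by
            rw [ENNReal.ofReal_mul hzp]
            have h4 : ENNReal.ofReal (‖ξ‖ ^ p) ≤ ENNReal.ofReal (‖ξ‖ ^ p + 1) :=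
              ENNReal.ofReal_le_ofReal (by linarith)
            calc ENNReal.ofReal (‖z‖ ^ p) * ENNReal.ofReal (‖ξ‖ ^ p) * Msup f ξ * A
                ≤ ENNReal.ofReal (‖z‖ ^ p) * ENNReal.ofReal (‖ξ‖ ^ p + 1) * Msup f ξ * A :=
                  mul_le_mul_left (mul_le_mul_left (mul_le_mul_right h4 _) _) _
              _ = A * ENNReal.ofReal (‖z‖ ^ p) * (Msup f ξ * ENNReal.ofReal (‖ξ‖ ^ p + 1)) := by
                  ring
    calc (∫⁻ ξ in ball (0 : EuclideanSpace ℝ (Fin d)) T,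
            ∫⁻ x, ENNReal.ofReal (f ξ ((ε⁻¹ : ℝ) • (v (x + ε • ξ) - v x))))
        ≤ ∫⁻ ξ in ball (0 : EuclideanSpace ℝ (Fin d)) T,
            A * ENNReal.ofReal (‖z‖ ^ p) * (Msup f ξ * ENNReal.ofReal (‖ξ‖ ^ p + 1)) :=
          setLIntegral_mono' measurableSet_ball hstep1
      _ ≤ ∫⁻ ξ, A * ENNReal.ofReal (‖z‖ ^ p) * (Msup f ξ * ENNReal.ofReal (‖ξ‖ ^ p + 1)) :=
          setLIntegral_le_lintegral _ _
      _ = A * ENNReal.ofReal (‖z‖ ^ p) * K :=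
          lintegral_const_mul' _ _ (ENNReal.mul_ne_top hAfin ENNReal.ofReal_ne_top)
  refine hmain.trans ?_
  have hAK : A * K ≤ ENNReal.ofReal ((A * K).toReal + 1) := by
    conv_lhs => rw [← ENNReal.ofReal_toReal (ENNReal.mul_ne_top hAfin hKfin)]
    exact ENNReal.ofReal_le_ofReal (by linarith)
  calc A * ENNReal.ofReal (‖z‖ ^ p) * K = (A * K) * ENNReal.ofReal (‖z‖ ^ p) := by ring
    _ ≤ ENNReal.ofReal ((A * K).toReal + 1) * ENNReal.ofReal (‖z‖ ^ p) :=
        mul_le_mul_left hAK _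
    _ = ENNReal.ofReal (((A * K).toReal + 1) * ‖z‖ ^ p) :=
        (ENNReal.ofReal_mul (by positivity)).symm
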